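/- Fix integers q, n ≥ 1, reals μ ∈ ℝ, σ² > 0, λ² > 0, data y_{ij} ∈ ℝ (i = 1,…,q, j = 1,…,n), N = qn, ȳ_{i·} = n⁻¹ ∑_j y_{ij}. Define the transformed extended log-likelihood ℓ_e(θ, v) = -((N-q)/2) log(2πσ²) - (q/2) log(2π(σ² + nλ²)) - (1/(2σ²)) ∑_{i,j} ( y_{ij} - μ - (σ²λ²/(σ² + nλ²))^{1/2} v_i )² - (σ²/(2(σ² + nλ²))) ∑_i v_i² - (q/2) log 2π, and ṽ_i = n λ² (ȳ_{i·} - μ) / (σ² λ² (σ² + n λ²))^{1/2}. Then for all (μ, σ², λ²) with σ² > 0, λ² > 0: ℓ_e(θ, ṽ) = -((N-q)/2) log(2πσ²) - (q/2) log(2π(σ² + nλ²)) - (1/(2σ²)) ∑_{i,j} (y_{ij} - ȳ_{i·})² - ∑_i n (ȳ_{i·} - μ)² / (2(σ² + nλ²)) - (q/2) log 2π; that is, ℓ_e(θ, ṽ) differs from the marginal log-likelihood of the model (the sum over i of the log-density of N(μ𝟙, σ² I_n + λ² 𝟙𝟙ᵀ) at (y_{i1},…,y_{in})) by a constant not depending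 on (μ, σ², λ²). -/

import Mathlib

lemma sum_sq_shift {n : ℕ} (hn : 1 ≤ n) (f : Fin n → ℝ) (t : ℝ) :
    ∑ j : Fin n, (f j - t) ^ 2 =
      ∑ j : Fin n, (f j - (∑ j : Fin n, f j) / n) ^ 2
        + n * ((∑ j : Fin n, f j) / n - t) ^ 2 := by
  have hn0 : (n : ℝ) ≠ 0 := by positivity
  set m : ℝ := (∑ j : Fin n, f j) / n with hm
  have hsum : ∑ j : Fin n, (f j - m) = 0 := by
    rw [Finset.sum_sub_distrib]
    simp [hm, Finset.card_univ]
    field_simp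
    ring
  have hexp : ∀ j : Fin n, (f j - t) ^ 2
      = (f j - m) ^ 2 + 2 * (m - t) * (f j - m) + (m - t) ^ 2 := by
    intro j; ring
  simp only [hexp, Finset.sum_add_distrib, ← Finset.mul_sum, hsum]
  simp [Finset.card_univ]

/-- Example 3.2 (canonical property in the one-way mixed model): evaluating the
transformed extended log-likelihood `ℓ_e(θ, v)` at the mode
`ṽ_i = nλ²(ȳ_{i·} - μ)/(σ²λ²(σ² + nλ²))^{1/2}` yields the marginal
log-likelihood expression (up to a θ-free constant), so the scale
`v_i = ((σ² + nλ²)/(σ²λ²))^{1/2} u_i` forms an h-likelihood. -/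
theorem mixed_model_canonical_identity (q n : ℕ) (hq : 1 ≤ q) (hn : 1 ≤ n)
    (μ σ2 lam2 : ℝ) (hσ2 : 0 < σ2) (hlam2 : 0 < lam2)
    (y : Fin q → Fin n → ℝ)
    (ybar : Fin q → ℝ) (hybar : ∀ i, ybar i = (∑ j : Fin n, y i j) / (n : ℝ))
    (N : ℕ) (hN : N = q * n)
    (ℓe : (Fin q → ℝ) → ℝ)
    (hdef : ∀ v : Fin q → ℝ, ℓe v =
      -(((N : ℝ) - q) / 2) * Real.log (2 * Real.pi * σ2)
      - ((q : ℝ) / 2) * Real.log (2 * Real.pi * (σ2 + (n : ℝ) * lam2))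
      - (1 / (2 * σ2)) * ∑ i : Fin q, ∑ j : Fin n,
          (y i j - μ - Real.sqrt (σ2 * lam2 / (σ2 + (n : ℝ) * lam2)) * v i) ^ 2
      - (σ2 / (2 * (σ2 + (n : ℝ) * lam2))) * ∑ i : Fin q, (v i) ^ 2
      - ((q : ℝ) / 2) * Real.log (2 * Real.pi))
    (vtil : Fin q → ℝ)
    (hvtil : ∀ i, vtil i =
      (n : ℝ) * lam2 * (ybar i - μ) / Real.sqrt (σ2 * lam2 * (σ2 + (n : ℝ) * lam2))) :
    ℓe vtil =
      -(((N : ℝ) - q) / 2) * Real.log (2 * Real.pi * σ2)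
      - ((q : ℝ) / 2) * Real.log (2 * Real.pi * (σ2 + (n : ℝ) * lam2))
      - (1 / (2 * σ2)) * ∑ i : Fin q, ∑ j : Fin n, (y i j - ybar i) ^ 2
      - (∑ i : Fin q, (n : ℝ) * (ybar i - μ) ^ 2 / (2 * (σ2 + (n : ℝ) * lam2)))
      - ((q : ℝ) / 2) * Real.log (2 * Real.pi) := by
  have hn0 : (n : ℝ) ≠ 0 := by positivity
  have hApos : (0:ℝ) < σ2 + (n : ℝ) * lam2 := by positivity
  set A : ℝ := σ2 + (n : ℝ) * lam2 with hA
  have hA0 : A ≠ 0 := ne_of_gt hApos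
  have hratio : Real.sqrt (σ2 * lam2 / A) / Real.sqrt (σ2 * lam2 * A) = 1 / A := by
    rw [← Real.sqrt_div (by positivity : (0:ℝ) ≤ σ2 * lam2 / A)]
    have h1 : σ2 * lam2 / A / (σ2 * lam2 * A) = (1 / A) ^ 2 := by
      field_simp
    rw [h1, Real.sqrt_sq (by positivity)]
  have hcv : ∀ i, Real.sqrt (σ2 * lam2 / A) * vtil i
      = (n : ℝ) * lam2 * (ybar i - μ) / A := by
    intro i
    rw [hvtil i]
    have h2 : Real.sqrt (σ2 * lam2 / A)
        * ((n : ℝ) * lam2 * (ybar i - μ) / Real.sqrt (σ2 * lam2 * A))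
        = (n : ℝ) * lam2 * (ybar i - μ)
          * (Real.sqrt (σ2 * lam2 / A) / Real.sqrt (σ2 * lam2 * A)) := by
      ring
    rw [h2, hratio]
    ring
  have hvsq : ∀ i, vtil i ^ 2
      = ((n : ℝ) * lam2 * (ybar i - μ)) ^ 2 / (σ2 * lam2 * A) := by
    intro i
    rw [hvtil i, div_pow, Real.sq_sqrt (by positivity)]
  have key : ∀ i,
      (1 / (2 * σ2)) * ∑ j : Fin n,
          (y i j - μ - Real.sqrt (σ2 * lam2 / A) * vtil i) ^ 2
        + (σ2 / (2 * A)) * vtil i ^ 2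
      = (1 / (2 * σ2)) * ∑ j : Fin n, (y i j - ybar i) ^ 2
        + (n : ℝ) * (ybar i - μ) ^ 2 / (2 * A) := by
    intro i
    have hshift : ∑ j : Fin n,
        (y i j - (μ + Real.sqrt (σ2 * lam2 / A) * vtil i)) ^ 2
        = ∑ j : Fin n, (y i j - ybar i) ^ 2
          + (n : ℝ) * (ybar i - (μ + Real.sqrt (σ2 * lam2 / A) * vtil i)) ^ 2 := by
      have := sum_sq_shift hn (fun j => y i j)
        (μ + Real.sqrt (σ2 * lam2 / A) * vtil i)
      simpa [← hybar i] using this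
    have hrw : ∀ j : Fin n,
        (y i j - μ - Real.sqrt (σ2 * lam2 / A) * vtil i) ^ 2
        = (y i j - (μ + Real.sqrt (σ2 * lam2 / A) * vtil i)) ^ 2 := by
      intro j; ring
    simp only [hrw]
    rw [hshift, hvsq i]
    have hmode : ybar i - (μ + Real.sqrt (σ2 * lam2 / A) * vtil i)
        = (ybar i - μ) * σ2 / A := by
      rw [hcv i]
      field_simp
      ring
    rw [hmode]
    field_simp
    ring
  have main :
      (1 / (2 * σ2)) * ∑ i : Fin q, ∑ j : Fin n,
          (y i j - μ - Real.sqrt (σ2 * lam2 / A) * vtil i) ^ 2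
        + (σ2 / (2 * A)) * ∑ i : Fin q, vtil i ^ 2
      = (1 / (2 * σ2)) * ∑ i : Fin q, ∑ j : Fin n, (y i j - ybar i) ^ 2
        + ∑ i : Fin q, (n : ℝ) * (ybar i - μ) ^ 2 / (2 * A) := by
    rw [Finset.mul_sum, Finset.mul_sum, Finset.mul_sum, ← Finset.sum_add_distrib,
      ← Finset.sum_add_distrib]
    exact Finset.sum_congr rfl fun i _ => key i
  rw [hdef vtil]
  rw [← hA] at *
  linarith [main]
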